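/- Let H₁ and H₂ be complex Hilbert spaces, let D₁ ⊆ H₁ and D₂ ⊆ H₂ be subspaces, let Q₁ and Q₂ be nonnegative Hermitian sesquilinear forms with domains D₁ and D₂ respectively, and let T : D₁ → D₂ be a linear map. Let k be a positive integer such that D₁ contains a k-dimensional subspace (so λ_k(Q₁, D₁) < ∞), and let α_k, β_k be real numbers with 0 < α_k < 1/(2k) and β_k > 0. Suppose that for every orthonormal set {u₁, …, u_k} ⊆ D₁ (orthonormal in H₁) and all indices 1 ≤ h, l ≤ k one has |⟨Tu_h, Tu_l⟩_{H₂} − δ_{hl}| ≤ α_k and |Q₂(Tu_h, Tu_l) − Q₁(u_h, u_l)| ≤ β_k. Then λ_k(Q₂, D₂) ≤ λ_k(Q₁, D₁) + 2k(α_k·λ_k(Q₁, D₁) + β_k). -/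

import Mathlib

open scoped ComplexInnerProductSpace ENNReal

/-- The supremum of the Rayleigh quotient `Q(u,u)/‖u‖²` over nonzero `u` in a subspace `L`. -/
noncomputable def rayleighSup {H : Type*} [NormedAddCommGroup H] [InnerProductSpace ℂ H]
    (Q : H → H → ℂ) (L : Submodule ℂ H) : ℝ≥0∞ :=
  ⨆ u ∈ {u : H | u ∈ L ∧ u ≠ 0}, ENNReal.ofReal ((Q u u).re / ‖u‖ ^ 2)

/-- The k-th variational eigenvalue of a form `Q` with domain `D`:
the infimum, over all `k`-dimensional subspaces `L ⊆ D`, of the sup of the Rayleigh quotient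
over `L`; the infimum of the empty set is `+∞`. -/
noncomputable def varEig {H : Type*} [NormedAddCommGroup H] [InnerProductSpace ℂ H]
    (Q : H → H → ℂ) (D : Submodule ℂ H) (k : ℕ) : ℝ≥0∞ :=
  ⨅ L ∈ {L : Submodule ℂ H | L ≤ D ∧ Module.finrank ℂ ↥L = k}, rayleighSup Q L

/-- `Q` is a nonnegative Hermitian sesquilinear form with domain the subspace `D`:
it is linear in the first argument (and hence, being Hermitian, conjugate-linear in the
second), Hermitian, and `Q(u,u) ≥ 0` on `D`. -/
structure IsNonnegHermitianFormOn {H : Type*} [NormedAddCommGroup H] [InnerProductSpace ℂ H]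
    (Q : H → H → ℂ) (D : Submodule ℂ H) : Prop where
  add_left : ∀ u v w, u ∈ D → v ∈ D → w ∈ D → Q (u + v) w = Q u w + Q v w
  smul_left : ∀ (c : ℂ) (u v : H), u ∈ D → v ∈ D → Q (c • u) v = c * Q u v
  hermitian : ∀ u v, u ∈ D → v ∈ D → Q u v = starRingEnd ℂ (Q v u)
  nonneg : ∀ u, u ∈ D → 0 ≤ (Q u u).re

namespace IsNonnegHermitianFormOn

variable {H : Type*} [NormedAddCommGroup H] [InnerProductSpace ℂ H]
  {Q : H → H → ℂ} {D : Submodule ℂ H}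

lemma zero_left (hQ : IsNonnegHermitianFormOn Q D) {y : H} (hy : y ∈ D) : Q 0 y = 0 := by
  have := hQ.smul_left 0 0 y D.zero_mem hy
  simpa using this

lemma sum_left (hQ : IsNonnegHermitianFormOn Q D) {ι : Type*} (s : Finset ι)
    (x : ι → H) (c : ι → ℂ) (hx : ∀ i, x i ∈ D) {y : H} (hy : y ∈ D) :
    Q (∑ i ∈ s, c i • x i) y = ∑ i ∈ s, c i * Q (x i) y := by
  classical
  induction s using Finset.induction with
  | empty => simpa using hQ.zero_left hy
  | @insert a s hnm ih =>
      rw [Finset.sum_insert hnm, Finset.sum_insert hnm,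
        hQ.add_left _ _ _ (D.smul_mem _ (hx _))
          (Submodule.sum_mem _ fun i _ => D.smul_mem _ (hx i)) hy,
        hQ.smul_left _ _ _ (hx _) hy, ih]

lemma expand (hQ : IsNonnegHermitianFormOn Q D) {ι : Type*} [Fintype ι]
    (x y : ι → H) (c d : ι → ℂ) (hx : ∀ i, x i ∈ D) (hy : ∀ j, y j ∈ D) :
    Q (∑ i, c i • x i) (∑ j, d j • y j)
      = ∑ i, ∑ j, c i * (starRingEnd ℂ) (d j) * Q (x i) (y j) := by
  have hsx : (∑ i, c i • x i) ∈ D := Submodule.sum_mem _ fun i _ => D.smul_mem _ (hx i)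
  have hsy : (∑ j, d j • y j) ∈ D := Submodule.sum_mem _ fun j _ => D.smul_mem _ (hy j)
  calc Q (∑ i, c i • x i) (∑ j, d j • y j)
      = (starRingEnd ℂ) (Q (∑ j, d j • y j) (∑ i, c i • x i)) := hQ.hermitian _ _ hsx hsy
    _ = (starRingEnd ℂ) (∑ j, d j * Q (y j) (∑ i, c i • x i)) := by
        rw [hQ.sum_left _ y d hy hsx]
    _ = ∑ j, (starRingEnd ℂ) (d j) * (starRingEnd ℂ) (Q (y j) (∑ i, c i • x i)) := by
        rw [map_sum]; simp [map_mul]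
    _ = ∑ j, (starRingEnd ℂ) (d j) * Q (∑ i, c i • x i) (y j) := by
        refine Finset.sum_congr rfl fun j _ => ?_
        rw [hQ.hermitian _ _ hsx (hy j)]
    _ = ∑ j, (starRingEnd ℂ) (d j) * ∑ i, c i * Q (x i) (y j) := by
        refine Finset.sum_congr rfl fun j _ => ?_
        rw [hQ.sum_left _ x c hx (hy j)]
    _ = ∑ i, ∑ j, c i * (starRingEnd ℂ) (d j) * Q (x i) (y j) := by
        rw [Finset.sum_comm]
        simp only [Finset.mul_sum]
        exact Finset.sum_congr rfl fun i _ => Finset.sum_congr rfl fun j _ => by ring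

end IsNonnegHermitianFormOn

lemma abs_re_double_sum_le {k : ℕ} (f g : Fin k → ℂ) (E : Fin k → Fin k → ℂ) {α : ℝ}
    (hE : ∀ h l, ‖(E h l)‖ ≤ α) :
    |(∑ h, ∑ l, f h * g l * E h l).re|
      ≤ α * ((∑ i, ‖(f i)‖) * (∑ i, ‖(g i)‖)) := by
  calc |(∑ h, ∑ l, f h * g l * E h l).re|
      ≤ ‖(∑ h, ∑ l, f h * g l * E h l)‖ := Complex.abs_re_le_norm _
    _ ≤ ∑ h, ‖(∑ l, f h * g l * E h l)‖ := norm_sum_le _ _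
    _ ≤ ∑ h, ∑ l, ‖(f h * g l * E h l)‖ :=
        Finset.sum_le_sum fun h _ => norm_sum_le _ _
    _ ≤ ∑ h, ∑ l, ‖(f h)‖ * ‖(g l)‖ * α := by
        refine Finset.sum_le_sum fun h _ => Finset.sum_le_sum fun l _ => ?_
        rw [norm_mul, norm_mul]
        exact mul_le_mul_of_nonneg_left (hE h l) (by positivity)
    _ = α * ((∑ i, ‖(f i)‖) * (∑ i, ‖(g i)‖)) := by
        rw [Finset.sum_mul_sum, Finset.mul_sum]
        exact Finset.sum_congr rfl fun h _ => by
          rw [Finset.mul_sum]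
          exact Finset.sum_congr rfl fun l _ => by ring

lemma norm_sq_eq_re_inner {H : Type*} [NormedAddCommGroup H] [InnerProductSpace ℂ H] (x : H) :
    ‖x‖ ^ 2 = (⟪x, x⟫ : ℂ).re := by
  have h := inner_self_eq_norm_sq (𝕜 := ℂ) x
  simpa using h.symm

lemma abs_re_double_sum_conj_left {k : ℕ} (c : Fin k → ℂ) (E : Fin k → Fin k → ℂ) {α : ℝ}
    (hE : ∀ h l, ‖(E h l)‖ ≤ α) :
    |(∑ h, ∑ l, (starRingEnd ℂ) (c h) * c l * E h l).re|
      ≤ α * (∑ i, ‖(c i)‖)^2 := by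
  have h := abs_re_double_sum_le (fun i => (starRingEnd ℂ) (c i)) c E hE
  simp only [Complex.norm_conj] at h
  rw [sq]
  exact h

lemma abs_re_double_sum_conj_right {k : ℕ} (c : Fin k → ℂ) (E : Fin k → Fin k → ℂ) {α : ℝ}
    (hE : ∀ h l, ‖(E h l)‖ ≤ α) :
    |(∑ h, ∑ l, c h * (starRingEnd ℂ) (c l) * E h l).re|
      ≤ α * (∑ i, ‖(c i)‖)^2 := by
  have h := abs_re_double_sum_le c (fun i => (starRingEnd ℂ) (c i)) E hE
  simp only [Complex.norm_conj] at h
  rw [sq]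
  exact h

set_option maxHeartbeats 1000000 in
/-- Lemma 2.2 of the paper: comparing variational eigenvalues via a transition operator `T`,
under the orthonormal-set hypothesis. -/
theorem varEig_le_of_transition_orthonormal
    {H₁ H₂ : Type*} [NormedAddCommGroup H₁] [InnerProductSpace ℂ H₁] [CompleteSpace H₁]
    [NormedAddCommGroup H₂] [InnerProductSpace ℂ H₂] [CompleteSpace H₂]
    (D₁ : Submodule ℂ H₁) (D₂ : Submodule ℂ H₂)
    (Q₁ : H₁ → H₁ → ℂ) (Q₂ : H₂ → H₂ → ℂ)
    (hQ₁ : IsNonnegHermitianFormOn Q₁ D₁) (hQ₂ : IsNonnegHermitianFormOn Q₂ D₂)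
    (T : D₁ →ₗ[ℂ] H₂) (hT : ∀ u : D₁, T u ∈ D₂)
    (k : ℕ) (hk : 0 < k)
    (hdim : ∃ L : Submodule ℂ H₁, L ≤ D₁ ∧ Module.finrank ℂ ↥L = k)
    (αk βk : ℝ) (hα : 0 < αk) (hα' : αk < 1 / (2 * k)) (hβ : 0 < βk)
    (hyp : ∀ u : Fin k → D₁, Orthonormal ℂ (fun i => (u i : H₁)) →
      ∀ h l : Fin k,
        ‖(⟪T (u h), T (u l)⟫ - if h = l then 1 else 0)‖ ≤ αk ∧
        ‖(Q₂ (T (u h)) (T (u l)) - Q₁ (u h) (u l))‖ ≤ βk) :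
    varEig Q₂ D₂ k ≤ varEig Q₁ D₁ k +
      ENNReal.ofReal (2 * k * (αk * (varEig Q₁ D₁ k).toReal + βk)) := by
  classical
  by_cases hfin : varEig Q₁ D₁ k = ⊤
  · rw [hfin]; simp
  set lam : ℝ := (varEig Q₁ D₁ k).toReal with hlamdef
  have hlam0 : (0:ℝ) ≤ lam := ENNReal.toReal_nonneg
  have hk' : (0:ℝ) < (k:ℝ) := by exact_mod_cast hk
  have hkα : (k:ℝ) * αk < 1/2 := by
    rw [lt_div_iff₀ (by positivity)] at hα'
    nlinarith
  have h1kα : (0:ℝ) < 1 - k * αk := by linarith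
  refine ENNReal.le_of_forall_pos_le_add fun ε hε _ => ?_
  set δ : ℝ := (ε:ℝ) / 2 with hδdef
  have hε0 : (0:ℝ) < (ε:ℝ) := hε
  have hδ0 : (0:ℝ) < δ := by positivity
  -- pick a nearly optimal subspace L for Q₁
  have hlt : varEig Q₁ D₁ k < varEig Q₁ D₁ k + ENNReal.ofReal δ :=
    ENNReal.lt_add_right hfin (by simp [ENNReal.ofReal_eq_zero]; linarith)
  obtain ⟨L, hLmem, hLray⟩ :
      ∃ L ∈ {L : Submodule ℂ H₁ | L ≤ D₁ ∧ Module.finrank ℂ ↥L = k},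
        rayleighSup Q₁ L < varEig Q₁ D₁ k + ENNReal.ofReal δ := by
    by_contra hcon
    push_neg at hcon
    have hge : varEig Q₁ D₁ k + ENNReal.ofReal δ ≤ varEig Q₁ D₁ k := by
      conv_rhs => rw [varEig]
      exact le_iInf₂ hcon
    exact absurd (lt_of_lt_of_le hlt hge) (lt_irrefl _)
  obtain ⟨hLD, hLrank⟩ := hLmem
  have hLfin : FiniteDimensional ℂ L := FiniteDimensional.of_finrank_pos (hLrank ▸ hk)
  set b : OrthonormalBasis (Fin k) ℂ L := (stdOrthonormalBasis ℂ L).reindex (finCongr hLrank)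
    with hbdef
  set u : Fin k → D₁ := fun i => ⟨(b i : H₁), hLD (b i).2⟩ with hudef
  have hu : Orthonormal ℂ (fun i => (u i : H₁)) := by
    rw [orthonormal_iff_ite]
    intro i j
    have hb := b.orthonormal
    rw [orthonormal_iff_ite] at hb
    have := hb i j
    rwa [Submodule.coe_inner] at this
  set v : Fin k → H₂ := fun i => T (u i) with hvdef
  have hvD : ∀ i, v i ∈ D₂ := fun i => hT (u i)
  have hypα : ∀ h l, ‖((⟪v h, v l⟫ : ℂ) - if h = l then 1 else 0)‖ ≤ αk :=
    fun h l => (hyp u hu h l).1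
  have hypβ : ∀ h l, ‖(Q₂ (v h) (v l) - Q₁ (u h) (u l))‖ ≤ βk :=
    fun h l => (hyp u hu h l).2
  -- Cauchy–Schwarz for coefficient sums
  have h3 : ∀ c : Fin k → ℂ,
      (∑ i, ‖(c i)‖)^2 ≤ (k:ℝ) * ∑ i, ‖(c i)‖^2 := by
    intro c
    simpa using sq_sum_le_card_mul_sum_sq (s := Finset.univ) (f := fun i => ‖(c i)‖)
  -- lower bound on the norm of combinations of the `v i`
  have hnorm_lb : ∀ c : Fin k → ℂ,
      (1 - k * αk) * (∑ i, ‖(c i)‖ ^ 2) ≤ ‖∑ i, c i • v i‖ ^ 2 := by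
    intro c
    set E : Fin k → Fin k → ℂ := fun h l => (⟪v h, v l⟫ : ℂ) - if h = l then 1 else 0 with hEdef
    have hexp : (⟪∑ i, c i • v i, ∑ i, c i • v i⟫ : ℂ)
        = ∑ h, ∑ l, (starRingEnd ℂ) (c h) * c l * ⟪v h, v l⟫ := by
      rw [sum_inner]
      refine Finset.sum_congr rfl fun h _ => ?_
      rw [inner_smul_left, inner_sum, Finset.mul_sum]
      refine Finset.sum_congr rfl fun l _ => ?_
      rw [inner_smul_right]; ring
    have hsplit : (⟪∑ i, c i • v i, ∑ i, c i • v i⟫ : ℂ)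
        = (∑ i, (starRingEnd ℂ) (c i) * c i)
          + ∑ h, ∑ l, (starRingEnd ℂ) (c h) * c l * E h l := by
      rw [hexp]
      have hterm : ∀ h l : Fin k, (starRingEnd ℂ) (c h) * c l * (⟪v h, v l⟫ : ℂ)
          = (starRingEnd ℂ) (c h) * c l * (if h = l then (1:ℂ) else 0)
            + (starRingEnd ℂ) (c h) * c l * E h l := by
        intro h l; rw [hEdef]; ring
      simp_rw [hterm, Finset.sum_add_distrib]
      congr 1
      refine Finset.sum_congr rfl fun h _ => ?_
      simp [Finset.sum_ite_eq, mul_ite]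
    have h1 : (∑ i, (starRingEnd ℂ) (c i) * c i).re = ∑ i, ‖(c i)‖ ^ 2 := by
      rw [Complex.re_sum]
      refine Finset.sum_congr rfl fun i _ => ?_
      rw [mul_comm, Complex.mul_conj]
      simp [Complex.normSq_eq_norm_sq, ← Complex.ofReal_pow]
    have h2' := abs_re_double_sum_conj_left c E hypα
    have hlow := (abs_le.mp h2').1
    have hup := mul_le_mul_of_nonneg_left (h3 c) hα.le
    rw [_root_.norm_sq_eq_re_inner, hsplit, Complex.add_re, h1]
    linarith
  -- Q₂ on combinations of `v` vs Q₁ on combinations of `u`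
  have hQbound : ∀ c : Fin k → ℂ,
      (Q₂ (∑ i, c i • v i) (∑ i, c i • v i)).re
        ≤ (Q₁ (∑ i, c i • (u i : H₁)) (∑ i, c i • (u i : H₁))).re
          + βk * ((k:ℝ) * ∑ i, ‖(c i)‖^2) := by
    intro c
    have e2 := hQ₂.expand v v c c hvD hvD
    have e1 := hQ₁.expand (fun i => (u i : H₁)) (fun i => (u i : H₁)) c c
      (fun i => (u i).2) (fun i => (u i).2)
    have hdiff : (Q₂ (∑ i, c i • v i) (∑ i, c i • v i)).re
        - (Q₁ (∑ i, c i • (u i : H₁)) (∑ i, c i • (u i : H₁))).re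
        = (∑ h, ∑ l, c h * (starRingEnd ℂ) (c l)
            * (Q₂ (v h) (v l) - Q₁ (u h) (u l))).re := by
      rw [e2, e1, ← Complex.sub_re, ← Finset.sum_sub_distrib]
      congr 1
      refine Finset.sum_congr rfl fun h _ => ?_
      rw [← Finset.sum_sub_distrib]
      exact Finset.sum_congr rfl fun l _ => by ring
    have habs := abs_re_double_sum_conj_right c
      (fun h l => Q₂ (v h) (v l) - Q₁ (u h) (u l)) hypβ
    have habs' := (abs_le.mp habs).2
    have hup := mul_le_mul_of_nonneg_left (h3 c) hβ.le
    linarith [hdiff, habs']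
  -- linear independence of the `v i`
  have hli : LinearIndependent ℂ v := by
    rw [Fintype.linearIndependent_iff]
    intro c hc i
    have h0 := hnorm_lb c
    rw [hc] at h0
    simp only [norm_zero, ne_eq, OfNat.ofNat_ne_zero, not_false_eq_true, zero_pow] at h0
    have hS2 : ∑ i, ‖(c i)‖^2 ≤ 0 := by nlinarith
    have hnn : ∀ j ∈ Finset.univ, (0:ℝ) ≤ ‖(c j)‖^2 := fun j _ => by positivity
    have hall := (Finset.sum_eq_zero_iff_of_nonneg hnn).mp
      (le_antisymm hS2 (Finset.sum_nonneg hnn))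
    have := hall i (Finset.mem_univ i)
    simpa using this
  set S : Submodule ℂ H₂ := Submodule.span ℂ (Set.range v) with hSdef
  have hSD : S ≤ D₂ := Submodule.span_le.mpr (by rintro _ ⟨i, rfl⟩; exact hvD i)
  have hSrank : Module.finrank ℂ ↥S = k := by
    rw [hSdef, finrank_span_eq_card hli, Fintype.card_fin]
  -- the Rayleigh bound on L
  have hMtop : varEig Q₁ D₁ k + ENNReal.ofReal δ ≠ ⊤ := by
    simp [hfin]
  have hMval : (varEig Q₁ D₁ k + ENNReal.ofReal δ).toReal = lam + δ := by
    rw [ENNReal.toReal_add hfin ENNReal.ofReal_ne_top, ENNReal.toReal_ofReal hδ0.le]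
  have hM : ∀ x : H₁, x ∈ L → x ≠ 0 → (Q₁ x x).re ≤ (lam + δ) * ‖x‖^2 := by
    intro x hxL hx0
    have hle : ENNReal.ofReal ((Q₁ x x).re / ‖x‖^2) ≤ varEig Q₁ D₁ k + ENNReal.ofReal δ := by
      refine le_trans ?_ hLray.le
      rw [rayleighSup]
      exact le_iSup₂ (f := fun u (_ : u ∈ {u : H₁ | u ∈ L ∧ u ≠ 0}) =>
        ENNReal.ofReal ((Q₁ u u).re / ‖u‖ ^ 2)) x ⟨hxL, hx0⟩
    rw [ENNReal.ofReal_le_iff_le_toReal hMtop, hMval] at hle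
    have hx2 : (0:ℝ) < ‖x‖^2 := by
      have := norm_pos_iff.mpr hx0
      positivity
    calc (Q₁ x x).re = ((Q₁ x x).re / ‖x‖^2) * ‖x‖^2 := by field_simp
      _ ≤ (lam + δ) * ‖x‖^2 := mul_le_mul_of_nonneg_right hle hx2.le
  set B : ℝ := (lam + δ + k * βk) / (1 - k * αk) with hBdef
  have hnum : (0:ℝ) ≤ lam + δ + k * βk := by nlinarith
  have hB0 : (0:ℝ) ≤ B := div_nonneg hnum h1kα.le
  -- the Rayleigh sup of Q₂ on S is at most B
  have hray2 : rayleighSup Q₂ S ≤ ENNReal.ofReal B := by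
    rw [rayleighSup]
    refine iSup₂_le fun w hw => ?_
    obtain ⟨hwS, hw0⟩ := hw
    obtain ⟨c, hc⟩ := (Submodule.mem_span_range_iff_exists_fun ℂ).mp hwS
    set S2 : ℝ := ∑ i, ‖(c i)‖^2 with hS2def
    have hS2nn : (0:ℝ) ≤ S2 := Finset.sum_nonneg fun i _ => by positivity
    have hS2pos : 0 < S2 := by
      rcases hS2nn.lt_or_eq with h | h
      · exact h
      · exfalso
        have hnn : ∀ j ∈ Finset.univ, (0:ℝ) ≤ ‖(c j)‖^2 := fun j _ => by positivity
        have hall := (Finset.sum_eq_zero_iff_of_nonneg hnn).mp h.symm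
        have hc0 : ∀ i, c i = 0 := fun i => by
          have := hall i (Finset.mem_univ i); simpa using this
        apply hw0
        rw [← hc]
        simp [hc0]
    set X : H₁ := ∑ i, c i • (u i : H₁) with hXdef
    have hXL : X ∈ L := Submodule.sum_mem _ fun i _ => L.smul_mem _ (b i).2
    have hXinner : (⟪X, X⟫ : ℂ) = ∑ i, (starRingEnd ℂ) (c i) * c i :=
      hu.inner_sum c c Finset.univ
    have hXnorm : ‖X‖^2 = S2 := by
      rw [_root_.norm_sq_eq_re_inner, hXinner, Complex.re_sum]
      refine Finset.sum_congr rfl fun i _ => ?_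
      rw [mul_comm, Complex.mul_conj]
      simp [Complex.normSq_eq_norm_sq, ← Complex.ofReal_pow]
    have hX0 : X ≠ 0 := by
      intro h
      rw [h, norm_zero] at hXnorm
      simp only [ne_eq, OfNat.ofNat_ne_zero, not_false_eq_true, zero_pow] at hXnorm
      linarith
    have hQ1X : (Q₁ X X).re ≤ (lam + δ) * S2 := by
      have := hM X hXL hX0
      rwa [hXnorm] at this
    have hwnorm : (1 - k * αk) * S2 ≤ ‖w‖^2 := by
      have := hnorm_lb c
      rw [hc] at this
      rwa [← hS2def] at this
    have hQw : (Q₂ w w).re ≤ (lam + δ) * S2 + βk * ((k:ℝ) * S2) := by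
      have := hQbound c
      rw [hc, ← hXdef, ← hS2def] at this
      linarith
    have hw2pos : (0:ℝ) < ‖w‖^2 := pow_pos (norm_pos_iff.mpr hw0) 2
    apply ENNReal.ofReal_le_ofReal
    rw [div_le_iff₀ hw2pos]
    have hBe : B * (1 - k * αk) = lam + δ + k * βk := by
      rw [hBdef]; field_simp
    calc (Q₂ w w).re ≤ (lam + δ) * S2 + βk * ((k:ℝ) * S2) := hQw
      _ = (lam + δ + k * βk) * S2 := by ring
      _ = B * ((1 - k * αk) * S2) := by rw [← hBe]; ring
      _ ≤ B * ‖w‖^2 := mul_le_mul_of_nonneg_left hwnorm hB0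
  -- put everything together
  have hvar2 : varEig Q₂ D₂ k ≤ ENNReal.ofReal B := by
    refine le_trans ?_ hray2
    rw [varEig]
    exact iInf₂_le S ⟨hSD, hSrank⟩
  have hBle : B ≤ lam + 2 * k * (αk * lam + βk) + 2 * δ := by
    rw [hBdef, div_le_iff₀ h1kα]
    have h12 : (0:ℝ) ≤ 1 - 2 * ((k:ℝ) * αk) := by linarith
    have hterm : (0:ℝ) ≤ (k:ℝ) * αk * lam + ((k:ℝ) * βk + δ) :=
      add_nonneg (mul_nonneg (mul_nonneg hk'.le hα.le) hlam0)
        (add_nonneg (mul_nonneg hk'.le hβ.le) hδ0.le)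
    nlinarith [mul_nonneg h12 hterm]
  have hR0 : (0:ℝ) ≤ 2 * k * (αk * lam + βk) :=
    mul_nonneg (by positivity) (add_nonneg (mul_nonneg hα.le hlam0) hβ.le)
  calc varEig Q₂ D₂ k ≤ ENNReal.ofReal B := hvar2
    _ ≤ ENNReal.ofReal (lam + (2 * k * (αk * lam + βk) + 2 * δ)) :=
        ENNReal.ofReal_le_ofReal (by linarith)
    _ = ENNReal.ofReal lam + ENNReal.ofReal (2 * k * (αk * lam + βk) + 2 * δ) :=
        ENNReal.ofReal_add hlam0 (by linarith)
    _ ≤ ENNReal.ofReal lam + (ENNReal.ofReal (2 * k * (αk * lam + βk))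
          + ENNReal.ofReal (2 * δ)) := add_le_add_right ENNReal.ofReal_add_le _
    _ = varEig Q₁ D₁ k + ENNReal.ofReal (2 * k * (αk * lam + βk)) + ↑ε := by
        rw [hlamdef, ENNReal.ofReal_toReal hfin, ← add_assoc]
        congr 1
        have h2δ : 2 * δ = (ε:ℝ) := by rw [hδdef]; ring
        rw [h2δ, ENNReal.ofReal_coe_nnreal]
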